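/- Let a > 0 and let λ be a nonzero real number. Let p : ℝ → ℝ be continuous, even (p(−t) = p(t) for all t), with p(t) = 0 whenever |t| ≥ a, and suppose ∫_{−a}^{a} p(t)·cos(λt) dt = 0. Define ω(t) = −(1/λ)·∫_{−a}^{t} sin(λ(t−τ))·p(τ) dτ. Then ω(t) = 0 for every t with |t| ≥ a. (In particular, the solution of ω'' + λ²ω = −p with ω(−a) = ω'(−a) = 0 is supported in [−a,a].) -/

import Mathlib

/-- The one-dimensional support claim underlying equation (E:SODE) in the proof of
    Theorem `T:ST1`: for `p` continuous, even, supported in `[-a,a]`, with vanishing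
    cosine moment `∫_{-a}^{a} p(t) cos(λt) dt = 0`, the Duhamel solution
    `ω(t) = -(1/λ) ∫_{-a}^{t} sin(λ(t-τ)) p(τ) dτ` of `ω'' + λ²ω = -p`,
    `ω(-a) = ω'(-a) = 0`, vanishes for `|t| ≥ a`. -/
theorem stmt_10 (a lam : ℝ) (ha : 0 < a) (hlam : lam ≠ 0)
    (p : ℝ → ℝ) (hp : Continuous p) (heven : ∀ t : ℝ, p (-t) = p t)
    (hsupp : ∀ t : ℝ, a ≤ |t| → p t = 0)
    (hmom : (∫ t in (-a)..a, p t * Real.cos (lam * t)) = 0)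
    (ω : ℝ → ℝ)
    (hω : ∀ t : ℝ, ω t = -(1 / lam) * ∫ τ in (-a)..t, Real.sin (lam * (t - τ)) * p τ) :
    ∀ t : ℝ, a ≤ |t| → ω t = 0 := by
  -- sine moment vanishes by oddness
  have hsinmom : (∫ t in (-a)..a, p t * Real.sin (lam * t)) = 0 := by
    have h := intervalIntegral.integral_comp_neg (a := -a) (b := a)
      (f := fun t => p t * Real.sin (lam * t))
    simp only [neg_neg] at h
    have h2 : (∫ t in (-a)..a, p (-t) * Real.sin (lam * (-t)))
        = ∫ t in (-a)..a, p t * Real.sin (lam * t) := h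
    have h3 : (∫ t in (-a)..a, p (-t) * Real.sin (lam * (-t)))
        = ∫ t in (-a)..a, -(p t * Real.sin (lam * t)) := by
      apply intervalIntegral.integral_congr
      intro x _
      simp [heven x, Real.sin_neg, mul_comm]
    rw [h3, intervalIntegral.integral_neg] at h2
    linarith
  intro t ht
  rw [hω t]
  rcases le_or_gt t 0 with htneg | htpos
  · -- t ≤ -a
    have hta : t ≤ -a := by
      rw [abs_of_nonpos htneg] at ht; linarith
    have : (∫ τ in (-a)..t, Real.sin (lam * (t - τ)) * p τ) = 0 := by
      have : (∫ τ in (-a)..t, Real.sin (lam * (t - τ)) * p τ)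
          = ∫ τ in (-a)..t, (0 : ℝ) := by
        apply intervalIntegral.integral_congr
        intro x hx
        rw [Set.uIcc_of_ge hta] at hx
        have hax : a ≤ |x| := by
          rw [abs_of_nonpos (by linarith [hx.2, ha] : x ≤ 0)]
          linarith [hx.2]
        simp [hsupp x hax]
      simp [this]
    rw [this, mul_zero]
  · -- t ≥ a
    have hta : a ≤ t := by rwa [abs_of_pos htpos] at ht
    have hint : ∀ u v : ℝ, IntervalIntegrable
        (fun τ => Real.sin (lam * (t - τ)) * p τ) MeasureTheory.volume u v := by
      intro u v
      exact (((Real.continuous_sin.comp (continuous_const.mul (continuous_const.sub continuous_id))).mul hp)).intervalIntegrable u v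
    have hsplit : (∫ τ in (-a)..t, Real.sin (lam * (t - τ)) * p τ)
        = (∫ τ in (-a)..a, Real.sin (lam * (t - τ)) * p τ)
          + ∫ τ in a..t, Real.sin (lam * (t - τ)) * p τ :=
      (intervalIntegral.integral_add_adjacent_intervals (hint _ _) (hint _ _)).symm
    have h2 : (∫ τ in a..t, Real.sin (lam * (t - τ)) * p τ) = 0 := by
      have : (∫ τ in a..t, Real.sin (lam * (t - τ)) * p τ)
          = ∫ τ in a..t, (0 : ℝ) := by
        apply intervalIntegral.integral_congr
        intro x hx
        rw [Set.uIcc_of_le hta] at hx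
        have hax : a ≤ |x| := le_trans hx.1 (le_abs_self x)
        simp [hsupp x hax]
      simp [this]
    have h1 : (∫ τ in (-a)..a, Real.sin (lam * (t - τ)) * p τ) = 0 := by
      have hexp : (∫ τ in (-a)..a, Real.sin (lam * (t - τ)) * p τ)
          = Real.sin (lam * t) * (∫ τ in (-a)..a, p τ * Real.cos (lam * τ))
            - Real.cos (lam * t) * ∫ τ in (-a)..a, p τ * Real.sin (lam * τ) := by
        rw [← intervalIntegral.integral_const_mul, ← intervalIntegral.integral_const_mul,
          ← intervalIntegral.integral_sub
            ((show Continuous fun τ => Real.sin (lam*t) * (p τ * Real.cos (lam*τ)) from continuous_const.mul (hp.mul (Real.continuous_cos.comp (continuous_const.mul continuous_id)))).intervalIntegrable _ _)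
            ((show Continuous fun τ => Real.cos (lam*t) * (p τ * Real.sin (lam*τ)) from continuous_const.mul (hp.mul (Real.continuous_sin.comp (continuous_const.mul continuous_id)))).intervalIntegrable _ _)]
        apply intervalIntegral.integral_congr
        intro x _
        simp only [mul_sub, Real.sin_sub]
        ring
      rw [hexp, hmom, hsinmom]
      ring
    rw [hsplit, h1, h2]
    ring
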